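/- The map σ₁ is a birational involution of ℙ²(ℂ) (there exists a nonzero homogeneous polynomial μ of degree 3 with σ₁ᵢ(σ₁(b)) = μ(b)·bᵢ for i = 0, 1, 2), and it lifts the twist β₁ × β₁ through Φ̃: the identity Φ̃ ∘ σ₁ = (β₁ × β₁) ∘ Φ̃ holds as rational maps ℙ² ⇢ ℙ¹×ℙ¹, i.e. writing Φ̃ = (Φ̃₁, Φ̃₂) in affine coordinates, Φ̃₁(σ₁(b)) = (Φ̃₁(b) − λ)/(Φ̃₁(b) − 1) and Φ̃₂(σ₁(b)) = (Φ̃₂(b) − λ)/(Φ̃₂(b) − 1) wherever both sides are defined. -/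

import Mathlib

/-- First affine coordinate of `Φ̃`. -/
noncomputable def Phi1 (t b₀ b₁ b₂ : ℂ) : ℂ := (b₁ * t - b₂) / (b₀ * t - b₁)

/-- Second affine coordinate of `Φ̃`. -/
noncomputable def Phi2 (l b₀ b₁ b₂ : ℂ) : ℂ :=
  -b₁ * (b₀ * l - b₁ * l - b₁ + b₂) / (b₁ ^ 2 - b₀ * b₂)

/-- First component of the involution `σ₁`. -/
noncomputable def sigma10 (l t b₀ b₁ b₂ : ℂ) : ℂ :=
  (t * b₀ - (1 + t) * b₁ + b₂) * ((l - t - 1) * b₁ + t * b₀)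

/-- Second component of the involution `σ₁`. -/
noncomputable def sigma11 (l t b₀ b₁ b₂ : ℂ) : ℂ :=
  t * (l * b₀ - b₁) * (t * b₀ + (-1 - t) * b₁ + b₂)

/-- Third component of the involution `σ₁`. -/
noncomputable def sigma12 (l t b₀ b₁ b₂ : ℂ) : ℂ :=
  t * (l ^ 2 * t * b₀ ^ 2 + (l ^ 2 + t) * b₁ ^ 2 + (-l ^ 2 - l * t - l ^ 2 * t) * b₀ * b₁
      + (l - t + l * t) * b₀ * b₂ - l * b₁ * b₂)

open MvPolynomial in
/-- auxiliary polynomial `ν` -/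
noncomputable def nuPoly (t : ℂ) : MvPolynomial (Fin 3) ℂ :=
  X 1 ^ 2 * X 2 + C (-(1 + t)) * X 1 ^ 3 + C (-(1 + t)) * (X 0 * (X 1 * X 2))
    + C (1 + 3 * t + t ^ 2) * (X 0 * X 1 ^ 2) + C t * (X 0 ^ 2 * X 2)
    + C (-(2 * t + 2 * t ^ 2)) * (X 0 ^ 2 * X 1) + C (t ^ 2) * X 0 ^ 3

open MvPolynomial in
lemma nuPoly_hom (t : ℂ) : (nuPoly t).IsHomogeneous 3 := by
  have hX : ∀ i : Fin 3, (X i : MvPolynomial (Fin 3) ℂ).IsHomogeneous 1 :=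
    fun i => isHomogeneous_X ℂ i
  refine ((((((((hX 1).pow 2).mul (hX 2)).add
    ((isHomogeneous_C _ _).mul ((hX 1).pow 3))).add
    ((isHomogeneous_C _ _).mul ((hX 0).mul ((hX 1).mul (hX 2))))).add
    ((isHomogeneous_C _ _).mul ((hX 0).mul ((hX 1).pow 2)))).add
    ((isHomogeneous_C _ _).mul (((hX 0).pow 2).mul (hX 2)))).add
    ((isHomogeneous_C _ _).mul (((hX 0).pow 2).mul (hX 1)))).add
    ((isHomogeneous_C _ _).mul ((hX 0).pow 3))

lemma nuPoly_eval (t b₀ b₁ b₂ : ℂ) :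
    MvPolynomial.eval ![b₀, b₁, b₂] (nuPoly t) =
      b₁ ^ 2 * b₂ + (-(1 + t)) * b₁ ^ 3 + (-(1 + t)) * (b₀ * (b₁ * b₂))
        + (1 + 3 * t + t ^ 2) * (b₀ * b₁ ^ 2) + t * (b₀ ^ 2 * b₂)
        + (-(2 * t + 2 * t ^ 2)) * (b₀ ^ 2 * b₁) + t ^ 2 * b₀ ^ 3 := by
  simp [nuPoly]

theorem sigma1_involution_lifts_beta1 (l t : ℂ) (hl0 : l ≠ 0) (hl1 : l ≠ 1)
    (ht0 : t ≠ 0) (ht1 : t ≠ 1) (htl : t ≠ l) :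
    (∃ μ : MvPolynomial (Fin 3) ℂ, μ ≠ 0 ∧ μ.IsHomogeneous 3 ∧
      ∀ b₀ b₁ b₂ : ℂ,
        sigma10 l t (sigma10 l t b₀ b₁ b₂) (sigma11 l t b₀ b₁ b₂) (sigma12 l t b₀ b₁ b₂) =
            MvPolynomial.eval ![b₀, b₁, b₂] μ * b₀ ∧
        sigma11 l t (sigma10 l t b₀ b₁ b₂) (sigma11 l t b₀ b₁ b₂) (sigma12 l t b₀ b₁ b₂) =
            MvPolynomial.eval ![b₀, b₁, b₂] μ * b₁ ∧
        sigma12 l t (sigma10 l t b₀ b₁ b₂) (sigma11 l t b₀ b₁ b₂) (sigma12 l t b₀ b₁ b₂) =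
            MvPolynomial.eval ![b₀, b₁, b₂] μ * b₂) ∧
    ∀ b₀ b₁ b₂ : ℂ,
      b₀ * t - b₁ ≠ 0 → b₁ ^ 2 - b₀ * b₂ ≠ 0 →
      Phi1 t b₀ b₁ b₂ ≠ 1 → Phi2 l b₀ b₁ b₂ ≠ 1 →
      sigma10 l t b₀ b₁ b₂ * t - sigma11 l t b₀ b₁ b₂ ≠ 0 →
      sigma11 l t b₀ b₁ b₂ ^ 2 - sigma10 l t b₀ b₁ b₂ * sigma12 l t b₀ b₁ b₂ ≠ 0 →
      Phi1 t (sigma10 l t b₀ b₁ b₂) (sigma11 l t b₀ b₁ b₂) (sigma12 l t b₀ b₁ b₂) =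
          (Phi1 t b₀ b₁ b₂ - l) / (Phi1 t b₀ b₁ b₂ - 1) ∧
      Phi2 l (sigma10 l t b₀ b₁ b₂) (sigma11 l t b₀ b₁ b₂) (sigma12 l t b₀ b₁ b₂) =
          (Phi2 l b₀ b₁ b₂ - l) / (Phi2 l b₀ b₁ b₂ - 1) := by
  constructor
  · refine ⟨MvPolynomial.C (t ^ 2 * (l - 1) ^ 2 * (t - l) ^ 2) * nuPoly t, ?_, ?_, ?_⟩
    · intro h
      have h2 : MvPolynomial.eval ![(0 : ℂ), 1, 1]
          (MvPolynomial.C (t ^ 2 * (l - 1) ^ 2 * (t - l) ^ 2) * nuPoly t) = 0 := by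
        rw [h]; simp
      rw [MvPolynomial.eval_mul, MvPolynomial.eval_C, nuPoly_eval] at h2
      have hc : t ^ 2 * (l - 1) ^ 2 * (t - l) ^ 2 ≠ 0 := by
        apply mul_ne_zero (mul_ne_zero (pow_ne_zero _ ht0) (pow_ne_zero _ (sub_ne_zero.mpr hl1)))
        exact pow_ne_zero _ (sub_ne_zero.mpr htl)
      have : (1 : ℂ) ^ 2 * 1 + (-(1 + t)) * 1 ^ 3 + (-(1 + t)) * ((0 : ℂ) * (1 * 1))
        + (1 + 3 * t + t ^ 2) * ((0 : ℂ) * 1 ^ 2) + t * ((0 : ℂ) ^ 2 * 1)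
        + (-(2 * t + 2 * t ^ 2)) * ((0 : ℂ) ^ 2 * 1) + t ^ 2 * (0 : ℂ) ^ 3 = -t := by ring
      rw [this] at h2
      exact ht0 (neg_eq_zero.mp ((mul_eq_zero.mp h2).resolve_left hc))
    · have h0 : (MvPolynomial.C (t ^ 2 * (l - 1) ^ 2 * (t - l) ^ 2) :
          MvPolynomial (Fin 3) ℂ).IsHomogeneous 0 := MvPolynomial.isHomogeneous_C _ _
      simpa using h0.mul (nuPoly_hom t)
    · intro b₀ b₁ b₂
      rw [MvPolynomial.eval_mul, MvPolynomial.eval_C, nuPoly_eval]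
      refine ⟨?_, ?_, ?_⟩ <;>
        simp only [sigma10, sigma11, sigma12] <;> ring
  · intro b₀ b₁ b₂ hd1 hd2 hp1 hp2 hs1 hs2
    have hn1 : b₁ * t - b₂ - (b₀ * t - b₁) ≠ 0 := by
      intro h
      apply hp1
      rw [Phi1, div_eq_one_iff_eq hd1]
      linear_combination h
    have hn2 : -b₁ * (b₀ * l - b₁ * l - b₁ + b₂) - (b₁ ^ 2 - b₀ * b₂) ≠ 0 := by
      intro h
      apply hp2
      rw [Phi2, div_eq_one_iff_eq hd2]
      linear_combination h
    constructor
    · rw [Phi1, Phi1]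
      rw [div_sub' hd1, div_sub' hd1, div_div_div_cancel_right₀ hd1]
      rw [div_eq_div_iff hs1 (by simpa using hn1)]
      simp only [sigma10, sigma11, sigma12]
      ring
    · rw [Phi2, Phi2]
      rw [div_sub' hd2, div_sub' hd2, div_div_div_cancel_right₀ hd2]
      rw [div_eq_div_iff hs2 (by simpa using hn2)]
      simp only [sigma10, sigma11, sigma12]
      ring
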